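/- Let Q_O, Q_T : Δ(S) × A → ℝ be bounded functions with Q_O = H_OTIB Q_O and Q_T = H_TIB Q_T. Then for every belief b ∈ Δ(S) and every a ∈ A: Q_O(b,a) ≤ Q_T(b,a) (the optimized tighter informed bound is at least as tight as the tighter informed bound). -/

import Mathlib

open Finset
open scoped Classical

set_option linter.unusedSectionVars false

/-- A belief (probability distribution) over a finite state space `S`. -/
structure Belief (S : Type*) [Fintype S] where
  val : S → ℝ
  nonneg : ∀ s, 0 ≤ val s
  sum_one : ∑ s, val s = 1

/-- The convex combination `l • b₁ + (1-l) • b₂` of two beliefs. -/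
noncomputable def Belief.mix {S : Type*} [Fintype S] (b₁ b₂ : Belief S) (l : ℝ)
    (h0 : 0 ≤ l) (h1 : l ≤ 1) : Belief S where
  val s := l * b₁.val s + (1 - l) * b₂.val s
  nonneg s := add_nonneg (mul_nonneg h0 (b₁.nonneg s))
    (mul_nonneg (by linarith) (b₂.nonneg s))
  sum_one := by
    rw [Finset.sum_add_distrib, ← Finset.mul_sum, ← Finset.mul_sum, b₁.sum_one, b₂.sum_one]
    ring

/-- `Q : Δ(S) × A → ℝ` is convex in the belief. -/
def ConvexInBelief {S A : Type*} [Fintype S] (Q : Belief S → A → ℝ) : Prop :=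
  ∀ (a : A) (b₁ b₂ : Belief S) (l : ℝ) (h0 : 0 ≤ l) (h1 : l ≤ 1),
    Q (Belief.mix b₁ b₂ l h0 h1) a ≤ l * Q b₁ a + (1 - l) * Q b₂ a

/-- A finite POMDP: transition function `T s a s' = T(s'|s,a)`, observation function
`Z a s' o = Ω(o|a,s')`, rewards `R`, discount `γ ∈ (0,1)`. -/
structure POMDP (S A O : Type*) [Fintype S] [Fintype A] [Fintype O] where
  T : S → A → S → ℝ
  T_nonneg : ∀ s a s', 0 ≤ T s a s'
  T_sum_one : ∀ s a, ∑ s', T s a s' = 1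
  Z : A → S → O → ℝ
  Z_nonneg : ∀ a s' o, 0 ≤ Z a s' o
  Z_sum_one : ∀ a s', ∑ o, Z a s' o = 1
  R : S → A → ℝ
  γ : ℝ
  γ_pos : 0 < γ
  γ_lt_one : γ < 1

namespace POMDP

variable {S A O : Type*} [Fintype S] [Fintype A] [Fintype O] [Nonempty S] [Nonempty A]
  [Nonempty O]
variable (M : POMDP S A O)

/-- `Pr(s',o|s,a)` -/
def prSO (s : S) (a : A) (s' : S) (o : O) : ℝ := M.Z a s' o * M.T s a s'

lemma prSO_nonneg (s : S) (a : A) (s' : S) (o : O) : 0 ≤ M.prSO s a s' o :=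
  mul_nonneg (M.Z_nonneg a s' o) (M.T_nonneg s a s')

/-- `Pr(o|s,a)` -/
def prO (s : S) (a : A) (o : O) : ℝ := ∑ s', M.prSO s a s' o

/-- `Pr(s',o|b,a)` -/
def bprSO (b : Belief S) (a : A) (s' : S) (o : O) : ℝ := ∑ s, b.val s * M.prSO s a s' o

lemma bprSO_nonneg (b : Belief S) (a : A) (s' : S) (o : O) : 0 ≤ M.bprSO b a s' o :=
  Finset.sum_nonneg fun s _ => mul_nonneg (b.nonneg s) (M.prSO_nonneg s a s' o)

/-- `Pr(o|b,a)` -/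
def bprO (b : Belief S) (a : A) (o : O) : ℝ := ∑ s', M.bprSO b a s' o

/-- The unit belief `δ_s`. -/
noncomputable def unit (s : S) : Belief S where
  val s' := if s' = s then 1 else 0
  nonneg s' := by by_cases h : s' = s <;> simp [h]
  sum_one := by simp

/-- The posterior belief `b_{b,a,o}`, defined when `Pr(o|b,a) > 0`. -/
noncomputable def post (b : Belief S) (a : A) (o : O) (h : 0 < M.bprO b a o) : Belief S where
  val s' := M.bprSO b a s' o / M.bprO b a o
  nonneg s' := div_nonneg (M.bprSO_nonneg b a s' o) h.le
  sum_one := by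
    rw [← Finset.sum_div]
    exact div_self (ne_of_gt h)

/-- The one-step belief `b_{s,a,o} = b_{δ_s,a,o}`, defined when `Pr(o|s,a) > 0`. -/
noncomputable def osb (s : S) (a : A) (o : O) (h : 0 < M.prO s a o) : Belief S where
  val s' := M.prSO s a s' o / M.prO s a o
  nonneg s' := div_nonneg (M.prSO_nonneg s a s' o) h.le
  sum_one := by
    unfold prO
    rw [← Finset.sum_div]
    exact div_self (ne_of_gt h)

/-- Expected reward `R(b,a)`. -/
noncomputable def expR (b : Belief S) (a : A) : ℝ := ∑ s, b.val s * M.R s a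

/-- The fast informed bound operator `H_FIB`. -/
noncomputable def HFIB (Q : Belief S → A → ℝ) (b : Belief S) (a : A) : ℝ :=
  M.expR b a + M.γ * ∑ o, Finset.univ.sup' Finset.univ_nonempty
    (fun a' => ∑ s', M.bprSO b a s' o * Q (unit s') a')

/-- The tighter informed bound operator `H_TIB`. -/
noncomputable def HTIB (Q : Belief S → A → ℝ) (b : Belief S) (a : A) : ℝ :=
  M.expR b a + M.γ * ∑ o, Finset.univ.sup' Finset.univ_nonempty
    (fun a' => ∑ s, if h : 0 < M.prO s a o then
      b.val s * M.prO s a o * Q (M.osb s a o h) a' else 0)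

/-- The optimal Bellman operator `H_POMDP`. -/
noncomputable def HPOMDP (Q : Belief S → A → ℝ) (b : Belief S) (a : A) : ℝ :=
  M.expR b a + M.γ * ∑ o, if h : 0 < M.bprO b a o then
    M.bprO b a o * Finset.univ.sup' Finset.univ_nonempty (fun a' => Q (M.post b a o h) a')
  else 0

/-- Index type for the family `B_SAO`: `none` indexes the initial belief `b₀`,
`some (s,a,o)` (with `Pr(o|s,a) > 0`) indexes the one-step belief `b_{s,a,o}`. -/
abbrev OSIdx : Type _ := Option {x : S × A × O // 0 < M.prO x.1 x.2.1 x.2.2}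

/-- The member of the family `B_SAO` (with initial belief `b₀`) at a given index. -/
noncomputable def member (b₀ : Belief S) : M.OSIdx → Belief S
  | none => b₀
  | some x => M.osb x.1.1 x.1.2.1 x.1.2.2 x.2

/-- `w` is a weight function for the belief `tgt` over the family `B_SAO`. -/
def IsWeight (b₀ : Belief S) (tgt : Belief S) (w : M.OSIdx → ℝ) : Prop :=
  (∀ i, 0 ≤ w i) ∧ ∀ s, ∑ i, w i * (M.member b₀ i).val s = tgt.val s

/-- The optimized tighter informed bound operator `H_OTIB`. -/
noncomputable def HOTIB (b₀ : Belief S) (Q : Belief S → A → ℝ) (b : Belief S) (a : A) : ℝ :=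
  M.expR b a + M.γ * ∑ o, if h : 0 < M.bprO b a o then
    Finset.univ.sup' Finset.univ_nonempty (fun a' =>
      M.bprO b a o * ⨅ w : {w : M.OSIdx → ℝ // M.IsWeight b₀ (M.post b a o h) w},
        ∑ i, (w : M.OSIdx → ℝ) i * Q (M.member b₀ i) a')
  else 0

/-- The operator `H_ŵ` induced by a weight selection `W`. -/
noncomputable def Hsel (b₀ : Belief S)
    (W : ∀ (b : Belief S) (a : A) (o : O), 0 < M.bprO b a o → (M.OSIdx → ℝ))
    (Q : Belief S → A → ℝ) (b : Belief S) (a : A) : ℝ :=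
  M.expR b a + M.γ * ∑ o, if h : 0 < M.bprO b a o then
    Finset.univ.sup' Finset.univ_nonempty (fun a' =>
      M.bprO b a o * ∑ i, W b a o h i * Q (M.member b₀ i) a')
  else 0

end POMDP


namespace POMDP

variable {S A O : Type*} [Fintype S] [Fintype A] [Fintype O] [Nonempty S] [Nonempty A]
  [Nonempty O]
variable (M : POMDP S A O)

lemma bprO_eq (b : Belief S) (a : A) (o : O) :
    M.bprO b a o = ∑ s, b.val s * M.prO s a o := by
  unfold bprO bprSO prO
  rw [Finset.sum_comm]
  simp [Finset.mul_sum]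

lemma sum_bprO (b : Belief S) (a : A) : ∑ o, M.bprO b a o = 1 := by
  simp only [bprO_eq]
  rw [Finset.sum_comm]
  have : ∀ s, ∑ o, b.val s * M.prO s a o = b.val s := by
    intro s
    rw [← Finset.mul_sum]
    have : ∑ o, M.prO s a o = 1 := by
      unfold prO prSO
      rw [Finset.sum_comm]
      have : ∀ s', ∑ o, M.Z a s' o * M.T s a s' = M.T s a s' := by
        intro s'
        rw [← Finset.sum_mul, M.Z_sum_one, one_mul]
      rw [Finset.sum_congr rfl fun s' _ => this s', M.T_sum_one]
    rw [this, mul_one]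
  rw [Finset.sum_congr rfl fun s _ => this s, b.sum_one]

lemma weight_sum_one (b₀ tgt : Belief S) (w : M.OSIdx → ℝ) (hw : M.IsWeight b₀ tgt w) :
    ∑ i, w i = 1 := by
  have : ∑ i, w i = ∑ i, ∑ s, w i * (M.member b₀ i).val s := by
    refine Finset.sum_congr rfl fun i _ => ?_
    rw [← Finset.mul_sum, (M.member b₀ i).sum_one, mul_one]
  rw [this, Finset.sum_comm]
  rw [Finset.sum_congr rfl fun s _ => hw.2 s, tgt.sum_one]

lemma weight_val_bdd (b₀ tgt : Belief S) (Q : Belief S → A → ℝ) (C : ℝ)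
    (hC : ∀ b a, |Q b a| ≤ C) (a' : A) :
    BddBelow (Set.range fun w : {w : M.OSIdx → ℝ // M.IsWeight b₀ tgt w} =>
      ∑ i, (w : M.OSIdx → ℝ) i * Q (M.member b₀ i) a') := by
  refine ⟨-C, ?_⟩
  rintro x ⟨w, rfl⟩
  have h1 : ∑ i, (w : M.OSIdx → ℝ) i * (-C) ≤ ∑ i, (w : M.OSIdx → ℝ) i * Q (M.member b₀ i) a' := by
    refine Finset.sum_le_sum fun i _ => ?_
    refine mul_le_mul_of_nonneg_left ?_ (w.2.1 i)
    exact (abs_le.mp (hC _ _)).1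
  calc -C = (∑ i, (w : M.OSIdx → ℝ) i) * (-C) := by
        rw [M.weight_sum_one b₀ tgt w w.2, one_mul]
    _ = ∑ i, (w : M.OSIdx → ℝ) i * (-C) := by rw [Finset.sum_mul]
    _ ≤ _ := h1

/-- The canonical weights `w_{b,a,o}`. -/
noncomputable def wcan (b : Belief S) (a : A) (o : O) : M.OSIdx → ℝ
  | none => 0
  | some x => if x.1.2.1 = a ∧ x.1.2.2 = o then
      b.val x.1.1 * M.prO x.1.1 a o / M.bprO b a o else 0

lemma wcan_sum (b : Belief S) (a : A) (o : O) (f : Belief S → ℝ) :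
    ∑ i, M.wcan b a o i * f (M.member b₀ i)
      = ∑ s, if h : 0 < M.prO s a o then
          b.val s * M.prO s a o / M.bprO b a o * f (M.osb s a o h) else 0 := by
  classical
  set P : S × A × O → Prop := fun x => 0 < M.prO x.1 x.2.1 x.2.2 with hP
  set G : S × A × O → ℝ := fun x =>
    if h : P x then (if x.2.1 = a ∧ x.2.2 = o then
      b.val x.1 * M.prO x.1 a o / M.bprO b a o * f (M.osb x.1 x.2.1 x.2.2 h) else 0) else 0
    with hG
  have step1 : ∑ i, M.wcan b a o i * f (M.member b₀ i) = ∑ x : Subtype P, G x.1 := by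
    rw [Fintype.sum_option]
    simp only [wcan, member, zero_mul, zero_add]
    refine Finset.sum_congr rfl fun x _ => ?_
    rw [hG]
    simp only [dif_pos (show P x.1 from x.2)]
    split_ifs with hc
    · rfl
    · rw [zero_mul]
  have step2 : ∑ x : Subtype P, G x.1 = ∑ x : S × A × O, G x := by
    rw [← Finset.sum_subtype (Finset.univ.filter P) (by simp; exact fun _ _ _ => Iff.rfl) G, Finset.sum_filter]
    refine Finset.sum_congr rfl fun x _ => ?_
    by_cases hx : P x
    · rw [if_pos hx]
    · rw [if_neg hx, hG]
      simp only
      rw [dif_neg hx]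
  have helper : ∀ (s : S) (a' : A) (o' : O),
      G (s, a', o') = if a' = a ∧ o' = o then G (s, a, o) else 0 := by
    intro s a' o'
    by_cases hc : a' = a ∧ o' = o
    · obtain ⟨rfl, rfl⟩ := hc
      rw [if_pos ⟨rfl, rfl⟩]
    · rw [if_neg hc, hG]
      by_cases hP' : P (s, a', o')
      · simp only [dif_pos hP']
        exact if_neg hc
      · simp only [dif_neg hP']
  have step3 : ∑ x : S × A × O, G x
      = ∑ s, if h : 0 < M.prO s a o then
          b.val s * M.prO s a o / M.bprO b a o * f (M.osb s a o h) else 0 := by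
    rw [Fintype.sum_prod_type]
    refine Finset.sum_congr rfl fun s _ => ?_
    rw [Fintype.sum_prod_type]
    have collapse : ∀ a' : A, ∑ o', G (s, a', o')
        = if a' = a then G (s, a, o) else 0 := by
      intro a'
      rw [Finset.sum_congr rfl fun o' _ => helper s a' o']
      by_cases ha' : a' = a
      · subst ha'
        simp
      · simp [ha']
    rw [Finset.sum_congr rfl fun a' _ => collapse a']
    rw [Finset.sum_ite_eq' Finset.univ a (fun _ => G (s, a, o))]
    rw [if_pos (Finset.mem_univ a), hG]
    simp only [hP]
    by_cases hs : 0 < M.prO s a o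
    · rw [dif_pos hs, dif_pos hs]
      simp
    · rw [dif_neg hs, dif_neg hs]
  rw [step1, step2, step3]

lemma wcan_isWeight (b : Belief S) (a : A) (o : O) (h : 0 < M.bprO b a o) :
    M.IsWeight b₀ (M.post b a o h) (M.wcan b a o) := by
  constructor
  · intro i
    match i with
    | none => exact le_refl 0
    | some x =>
      simp only [wcan]
      split_ifs with hc
      · exact div_nonneg (mul_nonneg (b.nonneg _)
          (Finset.sum_nonneg fun s' _ => M.prSO_nonneg _ _ _ _)) h.le
      · exact le_refl 0
  · intro s'
    have := M.wcan_sum (b₀ := b₀) b a o (fun b' => b'.val s')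
    rw [this]
    show _ = M.bprSO b a s' o / M.bprO b a o
    have key : ∀ s, (if hs : 0 < M.prO s a o then
        b.val s * M.prO s a o / M.bprO b a o * (M.osb s a o hs).val s' else 0)
        = b.val s * M.prSO s a s' o / M.bprO b a o := by
      intro s
      split_ifs with hs
      · show b.val s * M.prO s a o / M.bprO b a o * (M.prSO s a s' o / M.prO s a o) = _
        field_simp
      · push_neg at hs
        have : M.prO s a o = 0 :=
          le_antisymm hs (Finset.sum_nonneg fun s'' _ => M.prSO_nonneg _ _ _ _)
        have h2 : M.prSO s a s' o = 0 := by
          have hle : M.prSO s a s' o ≤ M.prO s a o :=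
            Finset.single_le_sum (fun s'' _ => M.prSO_nonneg s a s'' o) (Finset.mem_univ s')
          exact le_antisymm (this ▸ hle) (M.prSO_nonneg _ _ _ _)
        rw [h2, mul_zero, zero_div]
    rw [Finset.sum_congr rfl fun s _ => key s]
    unfold bprSO
    rw [Finset.sum_div]

lemma HOTIB_le_HTIB (b₀ : Belief S) (Q : Belief S → A → ℝ) (C : ℝ)
    (hC : ∀ b a, |Q b a| ≤ C) (b : Belief S) (a : A) :
    M.HOTIB b₀ Q b a ≤ M.HTIB Q b a := by
  unfold HOTIB HTIB
  have hγ : 0 ≤ M.γ := M.γ_pos.le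
  refine add_le_add_right (mul_le_mul_of_nonneg_left (Finset.sum_le_sum fun o _ => ?_) hγ) _
  split_ifs with h
  · refine Finset.sup'_le _ _ fun a' _ => ?_
    refine le_trans ?_ (Finset.le_sup' (f := fun a' => ∑ s, if hs : 0 < M.prO s a o then
      b.val s * M.prO s a o * Q (M.osb s a o hs) a' else 0) (Finset.mem_univ a'))
    have hinf : (⨅ w : {w : M.OSIdx → ℝ // M.IsWeight b₀ (M.post b a o h) w},
        ∑ i, (w : M.OSIdx → ℝ) i * Q (M.member b₀ i) a')
        ≤ ∑ i, M.wcan b a o i * Q (M.member b₀ i) a' :=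
      ciInf_le (M.weight_val_bdd b₀ (M.post b a o h) Q C hC a')
        ⟨M.wcan b a o, M.wcan_isWeight b a o h⟩
    calc M.bprO b a o * ⨅ w : {w : M.OSIdx → ℝ // M.IsWeight b₀ (M.post b a o h) w},
          ∑ i, (w : M.OSIdx → ℝ) i * Q (M.member b₀ i) a'
        ≤ M.bprO b a o * ∑ i, M.wcan b a o i * Q (M.member b₀ i) a' :=
          mul_le_mul_of_nonneg_left hinf h.le
      _ = ∑ s, if hs : 0 < M.prO s a o then
            b.val s * M.prO s a o * Q (M.osb s a o hs) a' else 0 := by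
          rw [M.wcan_sum b a o (fun b' => Q b' a'), Finset.mul_sum]
          refine Finset.sum_congr rfl fun s _ => ?_
          split_ifs with hs
          · field_simp
          · rw [mul_zero]
  · -- bprO = 0, the HTIB inner sums are zero
    push_neg at h
    have h0 : M.bprO b a o = 0 :=
      le_antisymm h (Finset.sum_nonneg fun s' _ => M.bprSO_nonneg b a s' o)
    have hall : ∀ s, b.val s * M.prO s a o = 0 := by
      have := M.bprO_eq b a o
      intro s
      have hsum : ∑ s, b.val s * M.prO s a o = 0 := by rw [← this, h0]
      have := (Finset.sum_eq_zero_iff_of_nonneg (fun s _ =>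
        mul_nonneg (b.nonneg s) (Finset.sum_nonneg fun s'' _ => M.prSO_nonneg _ _ _ _))).mp hsum
      exact this s (Finset.mem_univ s)
    have : ∀ a' : A, (∑ s, if hs : 0 < M.prO s a o then
        b.val s * M.prO s a o * Q (M.osb s a o hs) a' else 0) = 0 := by
      intro a'
      refine Finset.sum_eq_zero fun s _ => ?_
      split_ifs with hs
      · rw [hall s, zero_mul]
      · rfl
    have := Finset.sup'_congr (Finset.univ_nonempty) rfl (fun a' _ => this a')
    rw [this, Finset.sup'_const]

end POMDP

/-- The optimized tighter informed bound is at least as tight as the tighter informed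
bound: bounded fixed points satisfy `Q_OTIB ≤ Q_TIB` pointwise. -/
theorem QOTIB_le_QTIB {S A O : Type*} [Fintype S] [Fintype A] [Fintype O]
    [Nonempty S] [Nonempty A] [Nonempty O] (M : POMDP S A O) (b₀ : Belief S)
    (QO QT : Belief S → A → ℝ)
    (hQObdd : ∃ C : ℝ, ∀ b a, |QO b a| ≤ C) (hQTbdd : ∃ C : ℝ, ∀ b a, |QT b a| ≤ C)
    (hQO : ∀ b a, QO b a = M.HOTIB b₀ QO b a) (hQT : ∀ b a, QT b a = M.HTIB QT b a)
    (b : Belief S) (a : A) :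
    QO b a ≤ QT b a := by
  obtain ⟨C, hC⟩ := hQObdd
  obtain ⟨C', hC'⟩ := hQTbdd
  set D : ℝ := sSup (Set.range fun p : Belief S × A => QO p.1 p.2 - QT p.1 p.2) with hD
  have hne : (Set.range fun p : Belief S × A => QO p.1 p.2 - QT p.1 p.2).Nonempty :=
    ⟨QO b a - QT b a, ⟨(b, a), rfl⟩⟩
  have hbdd : BddAbove (Set.range fun p : Belief S × A => QO p.1 p.2 - QT p.1 p.2) := by
    refine ⟨C + C', ?_⟩
    rintro x ⟨p, rfl⟩
    have h1 := abs_le.mp (hC p.1 p.2)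
    have h2 := abs_le.mp (hC' p.1 p.2)
    simp only
    linarith [h1.2, h2.1]
  have hle : ∀ b a, QO b a - QT b a ≤ D := fun b a => le_csSup hbdd ⟨(b, a), rfl⟩
  have coeff : ∀ (b : Belief S) (a : A) (o : O),
      (∑ s, if h : 0 < M.prO s a o then b.val s * M.prO s a o else 0) = M.bprO b a o := by
    intro b a o
    rw [M.bprO_eq]
    refine Finset.sum_congr rfl fun s _ => ?_
    split_ifs with h
    · rfl
    · push_neg at h
      have h0 : M.prO s a o = 0 :=
        le_antisymm h (Finset.sum_nonneg fun s' _ => M.prSO_nonneg _ _ _ _)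
      rw [h0, mul_zero]
  have hmono : ∀ (b : Belief S) (a : A), M.HTIB QO b a ≤ M.HTIB QT b a + M.γ * D := by
    intro b a
    unfold POMDP.HTIB
    have per_o : ∀ o : O,
        Finset.univ.sup' Finset.univ_nonempty (fun a' => ∑ s, if h : 0 < M.prO s a o then
          b.val s * M.prO s a o * QO (M.osb s a o h) a' else 0)
        ≤ Finset.univ.sup' Finset.univ_nonempty (fun a' => ∑ s, if h : 0 < M.prO s a o then
          b.val s * M.prO s a o * QT (M.osb s a o h) a' else 0) + M.bprO b a o * D := by
      intro o
      refine Finset.sup'_le _ _ fun a' _ => ?_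
      have hterm : ∀ s : S, (if h : 0 < M.prO s a o then
          b.val s * M.prO s a o * QO (M.osb s a o h) a' else 0)
          ≤ (if h : 0 < M.prO s a o then
          b.val s * M.prO s a o * QT (M.osb s a o h) a' else 0)
          + (if h : 0 < M.prO s a o then b.val s * M.prO s a o else 0) * D := by
        intro s
        split_ifs with h
        · have hd := hle (M.osb s a o h) a'
          have hnn : 0 ≤ b.val s * M.prO s a o := mul_nonneg (b.nonneg s) h.le
          nlinarith
        · simp
      have hsum : (∑ s, if h : 0 < M.prO s a o then
          b.val s * M.prO s a o * QO (M.osb s a o h) a' else 0)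
          ≤ (∑ s, if h : 0 < M.prO s a o then
          b.val s * M.prO s a o * QT (M.osb s a o h) a' else 0) + M.bprO b a o * D := by
        calc (∑ s, if h : 0 < M.prO s a o then
            b.val s * M.prO s a o * QO (M.osb s a o h) a' else 0)
            ≤ ∑ s, ((if h : 0 < M.prO s a o then
              b.val s * M.prO s a o * QT (M.osb s a o h) a' else 0)
              + (if h : 0 < M.prO s a o then b.val s * M.prO s a o else 0) * D) :=
            Finset.sum_le_sum fun s _ => hterm s
          _ = (∑ s, if h : 0 < M.prO s a o then
              b.val s * M.prO s a o * QT (M.osb s a o h) a' else 0)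
              + (∑ s, if h : 0 < M.prO s a o then b.val s * M.prO s a o else 0) * D := by
            rw [Finset.sum_add_distrib, Finset.sum_mul]
          _ = _ := by rw [coeff b a o]
      exact hsum.trans (add_le_add_left (Finset.le_sup' (f := fun a' =>
        ∑ s, if h : 0 < M.prO s a o then
          b.val s * M.prO s a o * QT (M.osb s a o h) a' else 0) (Finset.mem_univ a')) _)
    have hsumo : (∑ o, Finset.univ.sup' Finset.univ_nonempty (fun a' =>
          ∑ s, if h : 0 < M.prO s a o then
            b.val s * M.prO s a o * QO (M.osb s a o h) a' else 0))
        ≤ (∑ o, Finset.univ.sup' Finset.univ_nonempty (fun a' =>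
          ∑ s, if h : 0 < M.prO s a o then
            b.val s * M.prO s a o * QT (M.osb s a o h) a' else 0)) + D := by
      calc _ ≤ ∑ o, (Finset.univ.sup' Finset.univ_nonempty (fun a' =>
            ∑ s, if h : 0 < M.prO s a o then
              b.val s * M.prO s a o * QT (M.osb s a o h) a' else 0) + M.bprO b a o * D) :=
          Finset.sum_le_sum fun o _ => per_o o
        _ = _ := by
          rw [Finset.sum_add_distrib]
          congr 1
          rw [← Finset.sum_mul]
          rw [show (∑ o, M.bprO b a o) = 1 from M.sum_bprO b a, one_mul]
    have hmul := mul_le_mul_of_nonneg_left hsumo M.γ_pos.le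
    rw [mul_add] at hmul
    linarith
  have key : ∀ (b : Belief S) (a : A), QO b a - QT b a ≤ M.γ * D := by
    intro b a
    have h1 : QO b a ≤ M.HTIB QO b a := by
      rw [hQO b a]
      exact M.HOTIB_le_HTIB b₀ QO C hC b a
    have h2 := hmono b a
    have h3 := hQT b a
    linarith
  have hDle : D ≤ M.γ * D := csSup_le hne (by rintro x ⟨p, rfl⟩; exact key p.1 p.2)
  have hD0 : D ≤ 0 := by nlinarith [M.γ_lt_one]
  have h4 := hle b a
  have h5 := key b a
  have h6 : 0 ≤ M.γ := M.γ_pos.le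
  nlinarith
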